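/- Let C be a strict monoidal category with a pure-braided structure (A,B), and define D_{U,V} := A_{U,I,V} = B_{U,I,V}. Then D is a natural isomorphism satisfying D_{I,X} = D_{X,I} = id_X and (D_{X,Y}⊗id_Z⊗id_T)(id_X⊗D_{Y⊗Z,T})(D_{X⊗Y,Z}⊗id_T) = (id_X⊗id_Y⊗D_{Z,T})(D_{X,Y⊗Z}⊗id_T)(id_X⊗D_{Y,Z⊗T}) for all objects X,Y,Z,T. -/

import Mathlib

open CategoryTheory MonoidalCategory

universe v u

/-- A monoidal category is strict when the associators and unitors are `eqToHom`s of
equalities of objects. -/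
structure MonStrict (C : Type u) [Category.{v} C] [MonoidalCategory C] : Prop where
  assocObj : ∀ X Y Z : C, (X ⊗ Y) ⊗ Z = X ⊗ (Y ⊗ Z)
  lidObj : ∀ X : C, 𝟙_ C ⊗ X = X
  ridObj : ∀ X : C, X ⊗ 𝟙_ C = X
  assocHom : ∀ X Y Z : C, (α_ X Y Z).hom = eqToHom (assocObj X Y Z)
  lidHom : ∀ X : C, (λ_ X).hom = eqToHom (lidObj X)
  ridHom : ∀ X : C, (ρ_ X).hom = eqToHom (ridObj X)

variable {C : Type u} [Category.{v} C] [MonoidalCategory C]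

/-- Transport of an endomorphism along an equality of objects of a strict monoidal
category. -/
def cE {X Y : C} (h : X = Y) (f : Y ⟶ Y) : X ⟶ X := eqToHom h ≫ f ≫ eqToHom h.symm

/-- A pure-braided structure on a strict monoidal category: two families of natural
isomorphisms `A, B : U ⊗ V ⊗ W ≅ U ⊗ V ⊗ W` satisfying the pure-braided axioms. -/
structure PureBraided (C : Type u) [Category.{v} C] [MonoidalCategory C]
    (hS : MonStrict C) where
  A : ∀ U V W : C, U ⊗ (V ⊗ W) ≅ U ⊗ (V ⊗ W)
  B : ∀ U V W : C, U ⊗ (V ⊗ W) ≅ U ⊗ (V ⊗ W)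
  natA : ∀ {U V W U' V' W' : C} (f : U ⟶ U') (g : V ⟶ V') (h : W ⟶ W'),
    (f ⊗ₘ (g ⊗ₘ h)) ≫ (A U' V' W').hom = (A U V W).hom ≫ (f ⊗ₘ (g ⊗ₘ h))
  natB : ∀ {U V W U' V' W' : C} (f : U ⟶ U') (g : V ⟶ V') (h : W ⟶ W'),
    (f ⊗ₘ (g ⊗ₘ h)) ≫ (B U' V' W').hom = (B U V W).hom ≫ (f ⊗ₘ (g ⊗ₘ h))
  /-- `A_{U⊗V,W,X} = A_{U,V⊗W,X}(id_U ⊗ A_{V,W,X})` -/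
  a1 : ∀ U V W X : C, (A (U ⊗ V) W X).hom =
    cE (by simp [hS.assocObj]) ((𝟙 U ⊗ₘ (A V W X).hom) ≫
      cE (by simp [hS.assocObj]) (A U (V ⊗ W) X).hom)
  /-- `A_{U,V,W⊗X} = (A_{U,V,W} ⊗ id_X) A_{U,V⊗W,X}` -/
  a2 : ∀ U V W X : C, (A U V (W ⊗ X)).hom =
    cE (by simp [hS.assocObj]) ((cE (by simp [hS.assocObj]) (A U (V ⊗ W) X).hom) ≫
      ((A U V W).hom ⊗ₘ 𝟙 X))
  /-- `B_{U⊗V,W,X} = (id_U ⊗ B_{V,W,X}) B_{U,V⊗W,X}` -/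
  baba : ∀ U V W X : C, (B (U ⊗ V) W X).hom =
    cE (by simp [hS.assocObj]) ((cE (by simp [hS.assocObj]) (B U (V ⊗ W) X).hom) ≫
      (𝟙 U ⊗ₘ (B V W X).hom))
  /-- `B_{U,V,W⊗X} = B_{U,V⊗W,X}(B_{U,V,W} ⊗ id_X)` -/
  b2 : ∀ U V W X : C, (B U V (W ⊗ X)).hom =
    cE (by simp [hS.assocObj]) (((B U V W).hom ⊗ₘ 𝟙 X) ≫
      cE (by simp [hS.assocObj]) (B U (V ⊗ W) X).hom)
  /-- `(A_{U,V,W} ⊗ id_X)(id_U ⊗ B_{V,W,X}) = (id_U ⊗ B_{V,W,X})(A_{U,V,W} ⊗ id_X)` -/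
  cab : ∀ U V W X : C,
    cE (by simp [hS.assocObj]) (𝟙 U ⊗ₘ (B V W X).hom) ≫ ((A U V W).hom ⊗ₘ 𝟙 X)
    = ((A U V W).hom ⊗ₘ 𝟙 X) ≫ cE (by simp [hS.assocObj]) (𝟙 U ⊗ₘ (B V W X).hom)
  /-- `A_{U,I,V} = B_{U,I,V}` -/
  t1t : ∀ U V : C, A U (𝟙_ C) V = B U (𝟙_ C) V

/-- A twine on a strict monoidal category. -/
structure Twine (C : Type u) [Category.{v} C] [MonoidalCategory C]
    (hS : MonStrict C) where
  D : ∀ X Y : C, X ⊗ Y ≅ X ⊗ Y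
  nat : ∀ {X Y X' Y' : C} (f : X ⟶ X') (g : Y ⟶ Y'),
    (f ⊗ₘ g) ≫ (D X' Y').hom = (D X Y).hom ≫ (f ⊗ₘ g)
  unit : (D (𝟙_ C) (𝟙_ C)).hom = 𝟙 (𝟙_ C ⊗ 𝟙_ C)
  /-- `(D_{X,Y} ⊗ id_Z) D_{X⊗Y,Z} = (id_X ⊗ D_{Y,Z}) D_{X,Y⊗Z}` -/
  fus : ∀ X Y Z : C, (D (X ⊗ Y) Z).hom ≫ ((D X Y).hom ⊗ₘ 𝟙 Z)
    = cE (by simp [hS.assocObj]) ((D X (Y ⊗ Z)).hom ≫ (𝟙 X ⊗ₘ (D Y Z).hom))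
  /-- the entwining axiom -/
  ent : ∀ X Y Z T : C,
    cE (by simp [hS.assocObj]) (𝟙 X ⊗ₘ (D Y (Z ⊗ T)).hom) ≫
      cE (by simp [hS.assocObj]) (𝟙 X ⊗ₘ ((D Y Z).inv ⊗ₘ 𝟙 T)) ≫
        ((D (X ⊗ Y) Z).hom ⊗ₘ 𝟙 T)
    = ((D (X ⊗ Y) Z).hom ⊗ₘ 𝟙 T) ≫
        cE (by simp [hS.assocObj]) (𝟙 X ⊗ₘ ((D Y Z).inv ⊗ₘ 𝟙 T)) ≫
          cE (by simp [hS.assocObj]) (𝟙 X ⊗ₘ (D Y (Z ⊗ T)).hom)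

/-- A strong twine on a strict monoidal category. -/
structure StrongTwine (C : Type u) [Category.{v} C] [MonoidalCategory C]
    (hS : MonStrict C) where
  D : ∀ X Y : C, X ⊗ Y ≅ X ⊗ Y
  nat : ∀ {X Y X' Y' : C} (f : X ⟶ X') (g : Y ⟶ Y'),
    (f ⊗ₘ g) ≫ (D X' Y').hom = (D X Y).hom ≫ (f ⊗ₘ g)
  unit : (D (𝟙_ C) (𝟙_ C)).hom = 𝟙 (𝟙_ C ⊗ 𝟙_ C)
  /-- `(T_{U,V} ⊗ id_W) T_{U⊗V,W} = (id_U ⊗ T_{V,W}) T_{U,V⊗W}` -/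
  fus : ∀ X Y Z : C, (D (X ⊗ Y) Z).hom ≫ ((D X Y).hom ⊗ₘ 𝟙 Z)
    = cE (by simp [hS.assocObj]) ((D X (Y ⊗ Z)).hom ≫ (𝟙 X ⊗ₘ (D Y Z).hom))
  /-- `(T_{U,V} ⊗ id_W)(id_U ⊗ T_{V,W}) = (id_U ⊗ T_{V,W})(T_{U,V} ⊗ id_W)` -/
  comm : ∀ X Y Z : C,
    cE (by simp [hS.assocObj]) (𝟙 X ⊗ₘ (D Y Z).hom) ≫ ((D X Y).hom ⊗ₘ 𝟙 Z)
    = ((D X Y).hom ⊗ₘ 𝟙 Z) ≫ cE (by simp [hS.assocObj]) (𝟙 X ⊗ₘ (D Y Z).hom)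

/-- A D-structure (consisting of isomorphisms) on a strict monoidal category. -/
structure DStructure (C : Type u) [Category.{v} C] [MonoidalCategory C]
    (hS : MonStrict C) where
  R : ∀ X : C, X ≅ X
  nat : ∀ {X Y : C} (f : X ⟶ Y), f ≫ (R Y).hom = (R X).hom ≫ f
  unit : (R (𝟙_ C)).hom = 𝟙 (𝟙_ C)
  /-- `(R_{X⊗Y} ⊗ id_Z)(id_X ⊗ R_{Y⊗Z}) = (id_X ⊗ R_{Y⊗Z})(R_{X⊗Y} ⊗ id_Z)` -/
  comm : ∀ X Y Z : C,
    cE (by simp [hS.assocObj]) (𝟙 X ⊗ₘ (R (Y ⊗ Z)).hom) ≫ ((R (X ⊗ Y)).hom ⊗ₘ 𝟙 Z)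
    = ((R (X ⊗ Y)).hom ⊗ₘ 𝟙 Z) ≫ cE (by simp [hS.assocObj]) (𝟙 X ⊗ₘ (R (Y ⊗ Z)).hom)



set_option linter.unusedSectionVars false
namespace Stmt10Aux

lemma cE_comp {X Y : C} (h : X = Y) (f g : Y ⟶ Y) : cE h (f ≫ g) = cE h f ≫ cE h g := by
  simp [cE]
lemma cE_cE {X Y Z : C} (h : X = Y) (h' : Y = Z) (f : Z ⟶ Z) :
    cE h (cE h' f) = cE (h.trans h') f := by subst h h'; simp [cE]
@[simp] lemma cE_id {X Y : C} (h : X = Y) : cE h (𝟙 Y) = 𝟙 X := by simp [cE]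
@[simp] lemma cE_rfl {X : C} (h : X = X) (f : X ⟶ X) : cE h f = f := by simp [cE]
lemma cE_cancel {X Y : C} (h : X = Y) (f g : Y ⟶ Y) : cE h f = cE h g ↔ f = g := by
  subst h; simp
lemma cE_eq_iff {X Y : C} (h : X = Y) (f : Y ⟶ Y) (g : X ⟶ X) :
    cE h f = g ↔ f = cE h.symm g := by subst h; simp
lemma tensor_cE {X X' Y Y' : C} (hX : X = X') (hY : Y = Y') (f : X' ⟶ X') (g : Y' ⟶ Y') :
    cE hX f ⊗ₘ cE hY g = cE (by rw [hX, hY]) (f ⊗ₘ g) := by subst hX hY; simp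
lemma id_tensor_cE {X Y Y' : C} (hY : Y = Y') (g : Y' ⟶ Y') :
    𝟙 X ⊗ₘ cE hY g = cE (by rw [hY]) (𝟙 X ⊗ₘ g) := by subst hY; simp
lemma cE_tensor_id {X X' Y : C} (hX : X = X') (f : X' ⟶ X') :
    cE hX f ⊗ₘ 𝟙 Y = cE (by rw [hX]) (f ⊗ₘ 𝟙 Y) := by subst hX; simp
lemma assoc_cE (hS : MonStrict C) {X Y Z : C} (f : X ⟶ X) (g : Y ⟶ Y) (h : Z ⟶ Z) :
    (f ⊗ₘ g) ⊗ₘ h = cE (hS.assocObj X Y Z) (f ⊗ₘ (g ⊗ₘ h)) := by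
  have := associator_naturality f g h
  rw [hS.assocHom] at this
  simp only [cE]
  rw [← Category.assoc, ← this]
  simp

variable {hS : MonStrict C} (P : PureBraided C hS)

lemma A_transport {U V W U' V' W' : C} (hU : U = U') (hV : V = V') (hW : W = W') :
    (P.A U V W).hom = cE (by rw [hU, hV, hW]) (P.A U' V' W').hom := by
  subst hU hV hW; simp [cE]
lemma B_transport {U V W U' V' W' : C} (hU : U = U') (hV : V = V') (hW : W = W') :
    (P.B U V W).hom = cE (by rw [hU, hV, hW]) (P.B U' V' W').hom := by
  subst hU hV hW; simp [cE]

/-- The twine candidate. -/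
noncomputable def DD (U V : C) : U ⊗ V ⟶ U ⊗ V :=
  cE (by simp [hS.lidObj]) (P.A U (𝟙_ C) V).hom

lemma DD_B (U V : C) : DD P U V = cE (by simp [hS.lidObj]) (P.B U (𝟙_ C) V).hom := by
  rw [DD, P.t1t]


lemma DD_transport {U V U' V' : C} (hU : U = U') (hV : V = V') :
    DD P U V = cE (by rw [hU, hV]) (DD P U' V') := by subst hU hV; simp

lemma DD_isIso (U V : C) : IsIso (DD P U V) := by
  rw [DD, cE]; infer_instance

lemma A_unitD (U V : C) : (P.A U (𝟙_ C) V).hom = cE (by simp [hS.lidObj]) (DD P U V) := by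
  rw [DD, cE_cE, cE_rfl]

lemma B_unitD (U V : C) : (P.B U (𝟙_ C) V).hom = cE (by simp [hS.lidObj]) (DD P U V) := by
  rw [← P.t1t, A_unitD]

lemma id_tensor_eqToHom {X : C} {A B : C} (h : A = B) :
    𝟙 X ⊗ₘ eqToHom h = eqToHom (by rw [h]) := by subst h; simp

lemma eqToHom_tensor_id {X : C} {A B : C} (h : A = B) :
    eqToHom h ⊗ₘ 𝟙 X = eqToHom (by rw [h]) := by subst h; simp

lemma tensor_lid {U U' V V' : C} (f : U ⟶ U') (g : V ⟶ V') :
    f ⊗ₘ (𝟙 (𝟙_ C) ⊗ₘ g) = eqToHom (by rw [hS.lidObj]) ≫ (f ⊗ₘ g) ≫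
      eqToHom (by rw [hS.lidObj]) := by
  have h1 : (𝟙 (𝟙_ C) ⊗ₘ g) = eqToHom (hS.lidObj V) ≫ g ≫ eqToHom (hS.lidObj V').symm := by
    have := leftUnitor_naturality g
    rw [hS.lidHom, hS.lidHom] at this
    rw [id_tensorHom, ← Category.assoc, ← this]; simp
  calc f ⊗ₘ (𝟙 (𝟙_ C) ⊗ₘ g)
      = (𝟙 U ≫ f ≫ 𝟙 U') ⊗ₘ (eqToHom (hS.lidObj V) ≫ g ≫ eqToHom (hS.lidObj V').symm) := by
        rw [← h1]; simp
    _ = (𝟙 U ⊗ₘ eqToHom (hS.lidObj V)) ≫ (f ⊗ₘ g) ≫ (𝟙 U' ⊗ₘ eqToHom (hS.lidObj V').symm) := by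
        rw [tensorHom_comp_tensorHom, tensorHom_comp_tensorHom]
    _ = _ := by
        rw [id_tensor_eqToHom, id_tensor_eqToHom]

lemma DD_nat {U V U' V' : C} (f : U ⟶ U') (g : V ⟶ V') :
    (f ⊗ₘ g) ≫ DD P U' V' = DD P U V ≫ (f ⊗ₘ g) := by
  have h := P.natA f (𝟙 (𝟙_ C)) g
  rw [tensor_lid (hS := hS) f g] at h
  rw [DD, DD, cE, cE]
  have h2 := congrArg (fun t => eqToHom (show U ⊗ V = U ⊗ (𝟙_ C ⊗ V) by rw [hS.lidObj]) ≫ t ≫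
    eqToHom (show U' ⊗ (𝟙_ C ⊗ V') = U' ⊗ V' by rw [hS.lidObj])) h
  simp only [Category.assoc, eqToHom_trans, eqToHom_refl, Category.comp_id,
    Category.id_comp, eqToHom_trans_assoc] at h2 ⊢
  exact h2


lemma cE_comp3 {X Y Z : C} (h : X = Y) (h' : X = Z) (f : Y ⟶ Y) (g : Z ⟶ Z) :
    cE h f ≫ cE h' g = cE h (f ≫ cE (h.symm.trans h') g) := by
  subst h h'; simp [cE]

lemma eq2 (U V X : C) : DD P (U ⊗ V) X =
    cE (hS.assocObj U V X) ((𝟙 U ⊗ₘ DD P V X) ≫ (P.A U V X).hom) := by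
  rw [DD, P.a1 U V (𝟙_ C) X, A_unitD, A_transport P rfl (hS.ridObj V) rfl]
  simp only [id_tensor_cE, cE_cE, cE_comp3, cE_rfl]

lemma eq3 (U V X : C) : DD P (U ⊗ V) X =
    cE (hS.assocObj U V X) ((P.B U V X).hom ≫ (𝟙 U ⊗ₘ DD P V X)) := by
  rw [DD_B, P.baba U V (𝟙_ C) X, B_unitD, B_transport P rfl (hS.ridObj V) rfl]
  simp only [id_tensor_cE, cE_cE, cE_comp3, cE_rfl]

lemma eq1 (U W X : C) : DD P U (W ⊗ X) =
    (P.A U W X).hom ≫ cE (hS.assocObj U W X).symm (DD P U W ⊗ₘ 𝟙 X) := by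
  rw [DD, P.a2 U (𝟙_ C) W X, A_unitD, A_transport P rfl (hS.lidObj W) rfl]
  simp only [cE_tensor_id, cE_cE, cE_comp3, cE_rfl]

lemma eq4 (U W X : C) : DD P U (W ⊗ X) =
    cE (hS.assocObj U W X).symm (DD P U W ⊗ₘ 𝟙 X) ≫ (P.B U W X).hom := by
  rw [DD_B, P.b2 U (𝟙_ C) W X, B_unitD, B_transport P rfl (hS.lidObj W) rfl]
  simp only [cE_tensor_id, cE_cE, cE_comp3, cE_rfl]
  rw [cE_comp, cE_cE, cE_rfl]


lemma unit_tensor_cE {V : C} (g : V ⟶ V) : 𝟙 (𝟙_ C) ⊗ₘ g = cE (by rw [hS.lidObj]) g := by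
  have := leftUnitor_naturality g
  rw [hS.lidHom] at this
  rw [id_tensorHom, cE, ← Category.assoc, ← this]; simp

lemma tensor_unit_cE {V : C} (g : V ⟶ V) : g ⊗ₘ 𝟙 (𝟙_ C) = cE (by rw [hS.ridObj]) g := by
  have := rightUnitor_naturality g
  rw [hS.ridHom] at this
  rw [tensorHom_id, cE, ← Category.assoc, ← this]; simp

lemma DD_lid (X : C) : DD P (𝟙_ C) X = 𝟙 (𝟙_ C ⊗ X) := by
  have h := eq2 P (𝟙_ C) (𝟙_ C) X
  rw [DD_transport P (hS.lidObj (𝟙_ C)) rfl, A_unitD, unit_tensor_cE (hS := hS)] at h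
  simp only [cE_comp3, cE_cE, cE_rfl] at h
  rw [cE_cancel] at h
  have : IsIso (DD P (𝟙_ C) X) := DD_isIso P (𝟙_ C) X
  have h2 : DD P (𝟙_ C) X ≫ DD P (𝟙_ C) X = DD P (𝟙_ C) X ≫ 𝟙 _ := by
    rw [← h]; simp
  exact (cancel_epi _).mp h2

lemma DD_rid (X : C) : DD P X (𝟙_ C) = 𝟙 (X ⊗ 𝟙_ C) := by
  have h := eq1 P X (𝟙_ C) (𝟙_ C)
  rw [DD_transport P rfl (hS.lidObj (𝟙_ C)), A_unitD, tensor_unit_cE (hS := hS)] at h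
  simp only [cE_comp3, cE_cE, cE_rfl] at h
  rw [cE_cancel] at h
  have : IsIso (DD P X (𝟙_ C)) := DD_isIso P X (𝟙_ C)
  have h2 : DD P X (𝟙_ C) ≫ DD P X (𝟙_ C) = DD P X (𝟙_ C) ≫ 𝟙 _ := by
    rw [← h]; simp
  exact (cancel_epi _).mp h2


lemma comp_tensor_id' {U V W : C} (f : U ⟶ V) (g : V ⟶ W) (X : C) :
    (f ≫ g) ⊗ₘ 𝟙 X = (f ⊗ₘ 𝟙 X) ≫ (g ⊗ₘ 𝟙 X) := by
  rw [tensorHom_comp_tensorHom]; simp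

lemma id_tensor_comp' {U V W : C} (f : U ⟶ V) (g : V ⟶ W) (X : C) :
    𝟙 X ⊗ₘ (f ≫ g) = (𝟙 X ⊗ₘ f) ≫ (𝟙 X ⊗ₘ g) := by
  rw [tensorHom_comp_tensorHom]; simp

lemma idid_tensor (hS : MonStrict C) {X Y W : C} (f : W ⟶ W) :
    𝟙 X ⊗ₘ (𝟙 Y ⊗ₘ f) = cE (hS.assocObj X Y W).symm (𝟙 (X ⊗ Y) ⊗ₘ f) := by
  have h2 := assoc_cE hS (𝟙 X) (𝟙 Y) f
  rw [id_tensorHom_id] at h2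
  rw [h2, cE_cE, cE_rfl]

lemma swapAB (X Y Z T : C) {E' : C} (h3 : E' = (X ⊗ (Y ⊗ Z)) ⊗ T)
    (h4 : E' = X ⊗ (Y ⊗ (Z ⊗ T))) :
    cE h4 (𝟙 X ⊗ₘ (P.B Y Z T).hom) ≫ cE h3 ((P.A X Y Z).hom ⊗ₘ 𝟙 T)
    = cE h3 ((P.A X Y Z).hom ⊗ₘ 𝟙 T) ≫ cE h4 (𝟙 X ⊗ₘ (P.B Y Z T).hom) := by
  subst h3
  simp only [cE_rfl]
  exact P.cab X Y Z T

lemma swapTensor {E' V W : C} (h : E' = V ⊗ W) (h' : E' = V ⊗ W)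
    (f : V ⟶ V) (g : W ⟶ W) :
    cE h (f ⊗ₘ 𝟙 W) ≫ cE h' (𝟙 V ⊗ₘ g) = cE h' (𝟙 V ⊗ₘ g) ≫ cE h (f ⊗ₘ 𝟙 W) := by
  subst h
  simp only [cE_rfl]
  rw [tensorHom_comp_tensorHom, tensorHom_comp_tensorHom]
  simp

lemma part5 (X Y Z T : C) :
    (DD P (X ⊗ Y) Z ⊗ₘ 𝟙 T) ≫
      cE (by simp [hS.assocObj]) (𝟙 X ⊗ₘ DD P (Y ⊗ Z) T) ≫
        ((DD P X Y ⊗ₘ 𝟙 Z) ⊗ₘ 𝟙 T)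
    = cE (by simp [hS.assocObj]) (𝟙 X ⊗ₘ DD P Y (Z ⊗ T)) ≫
        cE (by simp [hS.assocObj]) (DD P X (Y ⊗ Z) ⊗ₘ 𝟙 T) ≫
          cE (by simp [hS.assocObj]) (𝟙 (X ⊗ Y) ⊗ₘ DD P Z T) := by
  rw [eq2 P X Y Z, eq3 P Y Z T, eq1 P X Y Z, eq4 P Y Z T]
  simp only [cE_tensor_id, id_tensor_cE, comp_tensor_id', id_tensor_comp', cE_comp,
    cE_cE, cE_rfl, assoc_cE hS, idid_tensor hS, id_tensorHom_id, Category.assoc]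
  have s1 := swapAB P X Y Z T (E' := ((X ⊗ Y) ⊗ Z) ⊗ T)
    (by simp [hS.assocObj]) (by simp [hS.assocObj])
  have s2 := swapTensor (E' := ((X ⊗ Y) ⊗ Z) ⊗ T) (V := X ⊗ Y) (W := Z ⊗ T)
    (by simp [hS.assocObj]) (by simp [hS.assocObj]) (DD P X Y) (DD P Z T)
  rw [s2, reassoc_of% s1]

end Stmt10Aux

/-- From a pure-braided structure `(A, B)`, the family `D_{U,V} := A_{U,I,V} = B_{U,I,V}`
is a natural isomorphism satisfying `D_{I,X} = D_{X,I} = id_X` and the fused relation. -/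
theorem stmt10 (hS : MonStrict C) (P : PureBraided C hS)
    (Dm : ∀ U V : C, U ⊗ V ⟶ U ⊗ V)
    (hDm : ∀ U V : C, Dm U V = cE (by simp [hS.lidObj]) (P.A U (𝟙_ C) V).hom) :
    (∀ {U V U' V' : C} (f : U ⟶ U') (g : V ⟶ V'),
      (f ⊗ₘ g) ≫ Dm U' V' = Dm U V ≫ (f ⊗ₘ g)) ∧
    (∀ U V : C, IsIso (Dm U V)) ∧
    (∀ X : C, Dm (𝟙_ C) X = 𝟙 (𝟙_ C ⊗ X)) ∧
    (∀ X : C, Dm X (𝟙_ C) = 𝟙 (X ⊗ 𝟙_ C)) ∧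
    (∀ X Y Z T : C,
      (Dm (X ⊗ Y) Z ⊗ₘ 𝟙 T) ≫
        cE (by simp [hS.assocObj]) (𝟙 X ⊗ₘ Dm (Y ⊗ Z) T) ≫
          ((Dm X Y ⊗ₘ 𝟙 Z) ⊗ₘ 𝟙 T)
      = cE (by simp [hS.assocObj]) (𝟙 X ⊗ₘ Dm Y (Z ⊗ T)) ≫
          cE (by simp [hS.assocObj]) (Dm X (Y ⊗ Z) ⊗ₘ 𝟙 T) ≫
            cE (by simp [hS.assocObj]) (𝟙 (X ⊗ Y) ⊗ₘ Dm Z T)) := by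
  have hD : ∀ U V : C, Dm U V = Stmt10Aux.DD P U V := fun U V => hDm U V
  refine ⟨?_, ?_, ?_, ?_, ?_⟩
  · intro U V U' V' f g
    rw [hD, hD]
    exact Stmt10Aux.DD_nat P f g
  · intro U V
    rw [hD]
    exact Stmt10Aux.DD_isIso P U V
  · intro X
    rw [hD]
    exact Stmt10Aux.DD_lid P X
  · intro X
    rw [hD]
    exact Stmt10Aux.DD_rid P X
  · intro X Y Z T
    simp only [hD]
    exact Stmt10Aux.part5 P X Y Z T
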